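/- Let a, b, m, n be real numbers with b > 0, m > 0, n > 0. For x ≥ 0 define z(x) = a · e^{-b x^n / n} · ∫_0^x e^{b t^n / n} · t^{m-1} dt. Then for every x ≥ 0 the series ∑_{k=0}^∞ (-1)^k · a · b^k · x^{m+kn} / (m(m+n)(m+2n)⋯(m+kn)) converges and its sum equals z(x). -/

import Mathlib

open MeasureTheory Real Finset Filter

namespace EulerAux

lemma cont_rpow {n : ℝ} (hn : 0 < n) : Continuous fun t : ℝ => t ^ n := by
  rw [continuous_iff_continuousAt]
  intro t
  rcases eq_or_ne t 0 with h | h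
  · exact Real.continuousAt_rpow_const _ _ (Or.inr hn.le)
  · exact Real.continuousAt_rpow_const _ _ (Or.inl h)

lemma cont_exp_part {b n : ℝ} (hn : 0 < n) :
    Continuous fun t : ℝ => Real.exp (b * t ^ n / n) :=
  Real.continuous_exp.comp (((continuous_const.mul (cont_rpow hn)).div_const n))

lemma integrable_aux {b n x : ℝ} (hb : 0 < b) (hn : 0 < n) (hx : 0 < x) {μ : ℝ} (hμ : 0 < μ) :
    IntegrableOn (fun t => Real.exp (b * t ^ n / n) * t ^ (μ - 1)) (Set.Ioo 0 x) := by
  have hg : IntegrableOn (fun t : ℝ => Real.exp (b * x ^ n / n) * t ^ (μ - 1)) (Set.Ioo 0 x) := by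
    have h1 : IntegrableOn (fun t : ℝ => t ^ (μ - 1)) (Set.Ioo 0 x) :=
      (intervalIntegrable_iff_integrableOn_Ioo_of_le hx.le).mp
        (intervalIntegral.intervalIntegrable_rpow' (by linarith))
    exact h1.const_mul _
  have hc : ContinuousOn (fun t : ℝ => Real.exp (b * t ^ n / n) * t ^ (μ - 1)) (Set.Ioo 0 x) := by
    apply (cont_exp_part hn).continuousOn.mul
    intro t ht
    exact (Real.continuousAt_rpow_const _ _ (Or.inl ht.1.ne')).continuousWithinAt
  refine Integrable.mono' hg (hc.aestronglyMeasurable measurableSet_Ioo) ?_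
  refine (ae_restrict_iff' measurableSet_Ioo).mpr (ae_of_all _ fun t ht => ?_)
  have h0 : (0:ℝ) ≤ Real.exp (b * t ^ n / n) * t ^ (μ - 1) :=
    mul_nonneg (Real.exp_nonneg _) (Real.rpow_nonneg ht.1.le _)
  rw [Real.norm_eq_abs, abs_of_nonneg h0]
  have htn : t ^ n ≤ x ^ n := Real.rpow_le_rpow ht.1.le ht.2.le hn.le
  have : Real.exp (b * t ^ n / n) ≤ Real.exp (b * x ^ n / n) := by
    apply Real.exp_le_exp.mpr
    gcongr
  exact mul_le_mul_of_nonneg_right this (Real.rpow_nonneg ht.1.le _)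

lemma integral_le {b n x : ℝ} (hb : 0 < b) (hn : 0 < n) (hx : 0 < x) {μ : ℝ} (hμ : 0 < μ) :
    ∫ t in Set.Ioo (0:ℝ) x, Real.exp (b * t ^ n / n) * t ^ (μ - 1)
      ≤ Real.exp (b * x ^ n / n) * x ^ μ / μ := by
  have h1 : IntegrableOn (fun t : ℝ => t ^ (μ - 1)) (Set.Ioo 0 x) :=
    (intervalIntegrable_iff_integrableOn_Ioo_of_le hx.le).mp
      (intervalIntegral.intervalIntegrable_rpow' (by linarith))
  have hbd : ∫ t in Set.Ioo (0:ℝ) x, Real.exp (b * t ^ n / n) * t ^ (μ - 1)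
      ≤ ∫ t in Set.Ioo (0:ℝ) x, Real.exp (b * x ^ n / n) * t ^ (μ - 1) := by
    refine setIntegral_mono_on (integrable_aux hb hn hx hμ) (h1.const_mul _)
      measurableSet_Ioo fun t ht => ?_
    have htn : t ^ n ≤ x ^ n := Real.rpow_le_rpow ht.1.le ht.2.le hn.le
    have : Real.exp (b * t ^ n / n) ≤ Real.exp (b * x ^ n / n) := by
      apply Real.exp_le_exp.mpr; gcongr
    exact mul_le_mul_of_nonneg_right this (Real.rpow_nonneg ht.1.le _)
  have heq : ∫ t in Set.Ioo (0:ℝ) x, Real.exp (b * x ^ n / n) * t ^ (μ - 1)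
      = Real.exp (b * x ^ n / n) * (x ^ μ / μ) := by
    rw [integral_const_mul]
    congr 1
    have := integral_rpow (a := 0) (b := x) (r := μ - 1) (Or.inl (by linarith))
    rw [intervalIntegral.integral_of_le hx.le, integral_Ioc_eq_integral_Ioo] at this
    rw [this, Real.zero_rpow (by linarith : μ - 1 + 1 ≠ 0)]
    ring_nf
  rw [heq] at hbd
  rw [mul_div_assoc]
  linarith [hbd]

lemma integral_nonneg_aux {b n x : ℝ} {μ : ℝ} :
    0 ≤ ∫ t in Set.Ioo (0:ℝ) x, Real.exp (b * t ^ n / n) * t ^ (μ - 1) := by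
  refine setIntegral_nonneg measurableSet_Ioo fun t ht => ?_
  exact mul_nonneg (Real.exp_nonneg _) (Real.rpow_nonneg ht.1.le _)

lemma step {b n x : ℝ} (hb : 0 < b) (hn : 0 < n) (hx : 0 < x) {μ : ℝ} (hμ : 0 < μ) :
    ∫ t in Set.Ioo (0:ℝ) x, Real.exp (b * t ^ n / n) * t ^ (μ - 1)
      = Real.exp (b * x ^ n / n) * x ^ μ / μ
        - (b / μ) * ∫ t in Set.Ioo (0:ℝ) x, Real.exp (b * t ^ n / n) * t ^ (μ + n - 1) := by
  set F : ℝ → ℝ := fun t => Real.exp (b * t ^ n / n) * t ^ μ / μ with hF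
  have hI1 := integrable_aux (b := b) (n := n) (x := x) hb hn hx hμ
  have hI2 := integrable_aux (b := b) (n := n) (x := x) hb hn hx (by linarith : (0:ℝ) < μ + n)
  have hint : IntervalIntegrable
      (fun t => Real.exp (b * t ^ n / n) * t ^ (μ - 1)
        + (b / μ) * (Real.exp (b * t ^ n / n) * t ^ (μ + n - 1))) volume 0 x := by
    rw [intervalIntegrable_iff_integrableOn_Ioo_of_le hx.le]
    exact hI1.add (hI2.const_mul _)
  have hcont : ContinuousOn F (Set.Icc 0 x) :=
    (((cont_exp_part hn).mul (cont_rpow hμ)).div_const μ).continuousOn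
  have hderiv : ∀ t ∈ Set.Ioo (0:ℝ) x,
      HasDerivAt F (Real.exp (b * t ^ n / n) * t ^ (μ - 1)
        + (b / μ) * (Real.exp (b * t ^ n / n) * t ^ (μ + n - 1))) t := by
    intro t ht
    have h1 : HasDerivAt (fun t : ℝ => t ^ n) (n * t ^ (n - 1)) t :=
      Real.hasDerivAt_rpow_const (Or.inl ht.1.ne')
    have h2 : HasDerivAt (fun t : ℝ => b * t ^ n / n) (b * t ^ (n - 1)) t := by
      have := (h1.const_mul b).div_const n
      refine this.congr_deriv ?_
      rw [mul_div_assoc, mul_div_cancel_left₀ _ hn.ne']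
    have h3 : HasDerivAt (fun t : ℝ => Real.exp (b * t ^ n / n))
        (Real.exp (b * t ^ n / n) * (b * t ^ (n - 1))) t := h2.exp
    have h4 : HasDerivAt (fun t : ℝ => t ^ μ) (μ * t ^ (μ - 1)) t :=
      Real.hasDerivAt_rpow_const (Or.inl ht.1.ne')
    have h5 := (h3.mul h4).div_const μ
    refine h5.congr_deriv ?_
    have e1 : t ^ (μ + n - 1) = t ^ (n - 1) * t ^ μ := by
      rw [← Real.rpow_add ht.1]; ring_nf
    have e2 : t ^ (μ - 1) * μ = μ * t ^ (μ - 1) := by ring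
    rw [e1]
    field_simp
    ring
  have key := intervalIntegral.integral_eq_sub_of_hasDerivAt_of_le hx.le hcont hderiv hint
  have hF0 : F 0 = 0 := by
    simp [hF, Real.zero_rpow hμ.ne']
  rw [hF0, sub_zero] at key
  rw [intervalIntegral.integral_of_le hx.le, integral_Ioc_eq_integral_Ioo] at key
  rw [integral_add hI1 (hI2.const_mul _), integral_const_mul] at key
  have : F x = Real.exp (b * x ^ n / n) * x ^ μ / μ := rfl
  rw [this] at key
  linarith [key]

lemma prod_lower {m n : ℝ} (hm : 0 < m) (hn : 0 < n) (K : ℕ) :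
    m * (n ^ K * (K.factorial : ℝ)) ≤ ∏ j ∈ range (K + 1), (m + (j : ℝ) * n) := by
  rw [Finset.prod_range_succ']
  push_cast
  simp only [zero_mul, add_zero]
  have h2 : ((K.factorial : ℝ)) = ∏ j ∈ range K, ((j : ℝ) + 1) := by
    rw [← Finset.prod_range_add_one_eq_factorial]
    push_cast
    rfl
  have h3 : (∏ j ∈ range K, (((j : ℝ) + 1) * n)) * m
      ≤ (∏ j ∈ range K, (m + ((j : ℝ) + 1) * n)) * m := by
    apply mul_le_mul_of_nonneg_right _ hm.le
    apply Finset.prod_le_prod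
    · intro j _; positivity
    · intro j _; nlinarith [hm]
  calc m * (n ^ K * (K.factorial : ℝ))
      = (∏ j ∈ range K, (((j : ℝ) + 1) * n)) * m := by
        rw [Finset.prod_mul_distrib, Finset.prod_const, Finset.card_range, ← h2]; ring
    _ ≤ (∏ j ∈ range K, (m + ((j : ℝ) + 1) * n)) * m := h3

end EulerAux

set_option maxHeartbeats 2000000 in
/-- Euler's solution (§26) of `dz + b x^{n-1} z dx = a x^{m-1} dx`: for `b, m, n > 0` and
`x ≥ 0`, the series `∑ (-1)^k a b^k x^{m+kn} / (m(m+n)⋯(m+kn))` converges with sum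
`z(x) = a e^{-b x^n / n} ∫_0^x e^{b t^n / n} t^{m-1} dt`. -/
theorem euler_series_solution (a b m n : ℝ) (hb : 0 < b) (hm : 0 < m) (hn : 0 < n) :
    ∀ x : ℝ, 0 ≤ x →
      HasSum
        (fun k : ℕ =>
          (-1 : ℝ) ^ k * a * b ^ k * x ^ (m + (k : ℝ) * n) /
            ∏ j ∈ Finset.range (k + 1), (m + (j : ℝ) * n))
        (a * Real.exp (-b * x ^ n / n) *
          ∫ t in Set.Ioo (0 : ℝ) x, Real.exp (b * t ^ n / n) * t ^ (m - 1)) := by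
  intro x hx
  rcases hx.eq_or_lt with h | hx'
  · subst h
    have h0 : (fun k : ℕ =>
        (-1 : ℝ) ^ k * a * b ^ k * (0:ℝ) ^ (m + (k : ℝ) * n) /
          ∏ j ∈ Finset.range (k + 1), (m + (j : ℝ) * n)) = fun _ => (0:ℝ) := by
      funext k
      rw [Real.zero_rpow (by positivity : (0:ℝ) < m + (k:ℝ)*n).ne']
      ring
    rw [h0, Set.Ioo_self]
    simpa using hasSum_zero
  · set E := b * x ^ n / n with hE
    set I : ℝ → ℝ := fun μ => ∫ t in Set.Ioo (0:ℝ) x, Real.exp (b * t ^ n / n) * t ^ (μ - 1)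
      with hI
    set c : ℕ → ℝ := fun K => ∏ j ∈ range K, (m + (j : ℝ) * n) with hc
    clear_value E I c
    set f : ℕ → ℝ := fun k => (-1:ℝ)^k * b^k * x ^ (m + (k:ℝ)*n) / c (k+1) with hf
    clear_value f
    have hcpos : ∀ K, 0 < c K := by
      intro K; rw [hc]; exact Finset.prod_pos fun j _ => by positivity
    have hμpos : ∀ K : ℕ, 0 < m + (K:ℝ)*n := fun K => by positivity
    have hIle : ∀ K : ℕ, I (m + (K:ℝ)*n) ≤ Real.exp E * x ^ (m + (K:ℝ)*n) / (m + (K:ℝ)*n) := by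
      intro K
      simp only [hI, hE]
      exact EulerAux.integral_le hb hn hx' (hμpos K)
    have hI0 : ∀ K : ℕ, 0 ≤ I (m + (K:ℝ)*n) := by
      intro K
      simp only [hI]
      exact EulerAux.integral_nonneg_aux
    have hxpow : ∀ K : ℕ, x ^ (m + (K:ℝ)*n) = x ^ m * (x ^ n) ^ K := by
      intro K
      rw [Real.rpow_add hx', mul_comm (K:ℝ) n, Real.rpow_mul hx'.le, Real.rpow_natCast]
    have hkey : ∀ K : ℕ, b ^ K * x ^ (m + (K:ℝ)*n) / c (K+1)
        ≤ (x ^ m / m) * ((b * x ^ n / n) ^ K / K.factorial) := by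
      intro K
      have hfac : (0:ℝ) < K.factorial := by exact_mod_cast K.factorial_pos
      calc b ^ K * x ^ (m + (K:ℝ)*n) / c (K+1)
          ≤ b ^ K * x ^ (m + (K:ℝ)*n) / (m * (n ^ K * (K.factorial : ℝ))) := by
            apply div_le_div_of_nonneg_left _ (by positivity) _
            · positivity
            · rw [hc]; exact EulerAux.prod_lower hm hn K
        _ = (x ^ m / m) * ((b * x ^ n / n) ^ K / K.factorial) := by
            rw [hxpow K]
            have hn' : n ≠ 0 := hn.ne'
            field_simp
            ring_nf
            rw [mul_assoc _ (n ^ K), ← mul_pow n n⁻¹ K, mul_inv_cancel₀ hn', one_pow, mul_one]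
    have hcs : ∀ K : ℕ, c (K+1) = c K * (m + (K:ℝ)*n) := by
      intro K; rw [hc]; exact Finset.prod_range_succ _ K
    have hpartial : ∀ K : ℕ, ∑ k ∈ range K, f k
        = Real.exp (-E) * I m
          - (-1:ℝ)^K * b^K * Real.exp (-E) * I (m + (K:ℝ)*n) / c K := by
      intro K
      induction K with
      | zero =>
        have hc0 : c 0 = 1 := by rw [hc]; simp
        simp [hc0]
      | succ K ih =>
        rw [Finset.sum_range_succ, ih]
        have hstep : I (m + (K:ℝ)*n)
            = Real.exp E * x ^ (m + (K:ℝ)*n) / (m + (K:ℝ)*n)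
              - (b / (m + (K:ℝ)*n)) * I (m + ((K+1 : ℕ):ℝ)*n) := by
          simp only [hI, hE]
          have h := EulerAux.step hb hn hx' (hμpos K)
          have e : m + (K:ℝ)*n + n - 1 = m + ((K+1 : ℕ):ℝ)*n - 1 := by push_cast; ring
          rw [e] at h
          exact h
        rw [hstep, hf]
        simp only
        rw [hcs K, Real.exp_neg]
        have h1 : (c K) ≠ 0 := (hcpos K).ne'
        have h2 : (m + (K:ℝ)*n) ≠ 0 := (hμpos K).ne'
        have h3 : Real.exp E ≠ 0 := Real.exp_ne_zero E
        field_simp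
        ring
    have hbound : ∀ K : ℕ,
        ‖(-1:ℝ)^K * b^K * Real.exp (-E) * I (m + (K:ℝ)*n) / c K‖
          ≤ (x ^ m / m) * ((b * x ^ n / n) ^ K / K.factorial) := by
      intro K
      have habs : ‖(-1:ℝ)^K * b^K * Real.exp (-E) * I (m + (K:ℝ)*n) / c K‖
          = b^K * Real.exp (-E) * I (m + (K:ℝ)*n) / c K := by
        rw [Real.norm_eq_abs]
        rw [abs_div, abs_mul, abs_mul, abs_mul, abs_pow, abs_neg, abs_one, one_pow, one_mul,
          abs_of_pos (pow_pos hb K), abs_of_pos (Real.exp_pos _),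
          abs_of_nonneg (hI0 K), abs_of_pos (hcpos K)]
      rw [habs]
      calc b^K * Real.exp (-E) * I (m + (K:ℝ)*n) / c K
          ≤ b^K * Real.exp (-E) * (Real.exp E * x ^ (m + (K:ℝ)*n) / (m + (K:ℝ)*n)) / c K := by
            gcongr
            · exact (hcpos K).le
            · exact hIle K
        _ = b^K * x ^ (m + (K:ℝ)*n) / (c K * (m + (K:ℝ)*n)) := by
            rw [Real.exp_neg]
            have h1 : (c K) ≠ 0 := (hcpos K).ne'
            have h2 : (m + (K:ℝ)*n) ≠ 0 := (hμpos K).ne'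
            field_simp
        _ = b^K * x ^ (m + (K:ℝ)*n) / c (K+1) := by rw [hcs K]
        _ ≤ (x ^ m / m) * ((b * x ^ n / n) ^ K / K.factorial) := hkey K
    have hrem : Tendsto (fun K : ℕ =>
        (-1:ℝ)^K * b^K * Real.exp (-E) * I (m + (K:ℝ)*n) / c K) atTop (nhds 0) := by
      apply squeeze_zero_norm hbound
      have := (FloorSemiring.tendsto_pow_div_factorial_atTop (K := ℝ) (b * x ^ n / n)).const_mul
        (x ^ m / m)
      simpa using this
    have hsummable : Summable f := by
      apply Summable.of_norm_bounded
        ((Real.summable_pow_div_factorial (b * x ^ n / n)).mul_left (x ^ m / m))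
      intro k
      have habs : ‖f k‖ = b^k * x ^ (m + (k:ℝ)*n) / c (k+1) := by
        rw [hf]
        simp only
        rw [Real.norm_eq_abs, abs_div, abs_mul, abs_mul, abs_pow, abs_neg, abs_one, one_pow,
          one_mul, abs_of_pos (pow_pos hb k),
          abs_of_nonneg (Real.rpow_nonneg hx'.le _), abs_of_pos (hcpos (k+1))]
      rw [habs]
      exact hkey k
    have htend1 : Tendsto (fun K => ∑ k ∈ range K, f k) atTop
        (nhds (Real.exp (-E) * I m)) := by
      simp only [hpartial]
      simpa using (tendsto_const_nhds.sub hrem)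
    have hS := hsummable.hasSum
    have heq : ∑' k, f k = Real.exp (-E) * I m :=
      tendsto_nhds_unique hS.tendsto_sum_nat htend1
    rw [heq] at hS
    have final := hS.mul_left a
    have hfun : (fun k : ℕ =>
        (-1 : ℝ) ^ k * a * b ^ k * x ^ (m + (k : ℝ) * n) /
          ∏ j ∈ Finset.range (k + 1), (m + (j : ℝ) * n)) = fun k => a * f k := by
      funext k
      rw [hf]
      simp only
      rw [hc]
      ring
    rw [hfun]
    have hval : a * Real.exp (-b * x ^ n / n) *
        (∫ t in Set.Ioo (0 : ℝ) x, Real.exp (b * t ^ n / n) * t ^ (m - 1))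
        = a * (Real.exp (-E) * I m) := by
      rw [hI, hE]
      simp only [neg_mul, neg_div]
      ring
    rw [hval]
    exact final
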